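/- Let (V, dist) be a metric space, let v ∈ V, and let x_0 = v, x_1, …, x_ℓ be a sequence of points with ℓ ≤ β for some integer β ≥ 1, where x_ℓ ∈ C for a finite nonempty set C ⊆ V. Suppose nonnegative reals d(x_0), …, d(x_ℓ) satisfy d(x_ℓ) = 0 and d(x_{i−1}) ≤ 2^{ε/β} · (d(x_i) + w_i) for all i ∈ [ℓ], where w_i := dist(x_{i−1}, x_i), and suppose Σ_{i∈[ℓ]} w_i ≤ 2^ε · dist(v, C) where dist(v, C) := min_{c∈C} dist(v, c). Then d(v) = d(x_0) ≤ 2^{2ε} · dist(v, C). -/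
import Mathlib


/-- The edge-relaxation invariant along a hop-bounded approximately-shortest path
from `v` to its nearest center implies the maintained value `d 0` is a
`2^(2ε)`-approximate distance to the center set. -/
theorem hop_bounded_relaxation {V : Type*} [MetricSpace V]
    (β ℓ : ℕ) (hβ : 1 ≤ β) (hℓβ : ℓ ≤ β) (ε : ℝ) (hε0 : 0 < ε) (hε1 : ε < 1)
    (C : Finset V) (hC : C.Nonempty) (v : V) (x : ℕ → V) (hx0 : x 0 = v)
    (hxℓ : x ℓ ∈ C) (d : ℕ → ℝ) (hd0 : ∀ i, 0 ≤ d i) (hdℓ : d ℓ = 0)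
    (hrelax : ∀ i < ℓ,
      d i ≤ (2 : ℝ) ^ (ε / (β : ℝ)) * (d (i + 1) + dist (x i) (x (i + 1))))
    (hpath : ∑ i ∈ Finset.range ℓ, dist (x i) (x (i + 1)) ≤
      (2 : ℝ) ^ ε * (C.inf' hC fun c => dist v c)) :
    d 0 ≤ (2 : ℝ) ^ (2 * ε) * (C.inf' hC fun c => dist v c) := by
  have hβpos : (0:ℝ) < (β:ℝ) := by exact_mod_cast hβ
  have hεβ : 0 ≤ ε / (β:ℝ) := le_of_lt (div_pos hε0 hβpos)
  -- main induction
  have key : ∀ k, k ≤ ℓ → d (ℓ - k) ≤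
      (2:ℝ) ^ (ε / (β:ℝ) * k) * ∑ j ∈ Finset.Ico (ℓ - k) ℓ, dist (x j) (x (j+1)) := by
    intro k
    induction k with
    | zero => intro _; simp [hdℓ]
    | succ k ih =>
      intro hk
      have hk' : k ≤ ℓ := Nat.le_of_succ_le hk
      have hi : ℓ - (k+1) < ℓ := Nat.sub_lt (Nat.lt_of_lt_of_le (Nat.zero_lt_succ k) hk) (Nat.zero_lt_succ k)
      set i := ℓ - (k+1) with hidef
      have hsucc : i + 1 = ℓ - k := by omega
      have hS' : (0:ℝ) ≤ ∑ j ∈ Finset.Ico (ℓ - k) ℓ, dist (x j) (x (j+1)) :=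
        Finset.sum_nonneg fun j _ => dist_nonneg
      have hw : (0:ℝ) ≤ dist (x i) (x (i+1)) := dist_nonneg
      have h1 : d i ≤ (2:ℝ) ^ (ε / (β:ℝ)) * (d (i+1) + dist (x i) (x (i+1))) := hrelax i hi
      have h2 := ih hk'
      rw [← hsucc] at h2
      have hone : (1:ℝ) ≤ (2:ℝ) ^ (ε / (β:ℝ) * k) := by
        rw [show (1:ℝ) = (2:ℝ) ^ (0:ℝ) from (Real.rpow_zero 2).symm]
        exact Real.rpow_le_rpow_of_exponent_le one_le_two (by positivity)
      have h3 : d (i+1) + dist (x i) (x (i+1)) ≤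
          (2:ℝ) ^ (ε / (β:ℝ) * k) * (∑ j ∈ Finset.Ico (i+1) ℓ, dist (x j) (x (j+1)) + dist (x i) (x (i+1))) := by
        rw [mul_add]
        refine add_le_add h2 ?_
        nlinarith
      have hpow : (0:ℝ) ≤ (2:ℝ) ^ (ε / (β:ℝ)) := by positivity
      have h4 : d i ≤ (2:ℝ) ^ (ε / (β:ℝ)) * ((2:ℝ) ^ (ε / (β:ℝ) * k) *
          (∑ j ∈ Finset.Ico (i+1) ℓ, dist (x j) (x (j+1)) + dist (x i) (x (i+1)))) :=
        h1.trans (by exact mul_le_mul_of_nonneg_left h3 hpow)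
      have hsum : ∑ j ∈ Finset.Ico i ℓ, dist (x j) (x (j+1)) =
          dist (x i) (x (i+1)) + ∑ j ∈ Finset.Ico (i+1) ℓ, dist (x j) (x (j+1)) :=
        Finset.sum_eq_sum_Ico_succ_bot hi _
      have hexp : (2:ℝ) ^ (ε / (β:ℝ)) * (2:ℝ) ^ (ε / (β:ℝ) * k) = (2:ℝ) ^ (ε / (β:ℝ) * (k+1:ℕ)) := by
        rw [← Real.rpow_add (by norm_num)]
        congr 1
        push_cast
        ring
      calc d i ≤ _ := h4
        _ = (2:ℝ) ^ (ε / (β:ℝ) * (k+1:ℕ)) * ∑ j ∈ Finset.Ico i ℓ, dist (x j) (x (j+1)) := by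
            rw [hsum, ← hexp]; ring
  have hfinal := key ℓ le_rfl
  simp only [Nat.sub_self] at hfinal
  rw [Finset.sum_Ico_eq_sum_range] at hfinal
  simp only [Nat.sub_zero, Nat.zero_add] at hfinal
  have hD : (0:ℝ) ≤ C.inf' hC fun c => dist v c := by
    obtain ⟨c, hc, hcd⟩ := Finset.exists_mem_eq_inf' hC fun c => dist v c
    rw [hcd]; exact dist_nonneg
  have hSnn : (0:ℝ) ≤ ∑ i ∈ Finset.range ℓ, dist (x i) (x (i+1)) :=
    Finset.sum_nonneg fun j _ => dist_nonneg
  have hexp2 : ε / (β:ℝ) * ℓ ≤ ε := by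
    rw [div_mul_eq_mul_div, div_le_iff₀ hβpos]
    have : (ℓ:ℝ) ≤ (β:ℝ) := by exact_mod_cast hℓβ
    nlinarith
  have hmono : (2:ℝ) ^ (ε / (β:ℝ) * ℓ) ≤ (2:ℝ) ^ ε :=
    Real.rpow_le_rpow_of_exponent_le (by norm_num) hexp2
  have h5 : d 0 ≤ (2:ℝ) ^ ε * ∑ i ∈ Finset.range ℓ, dist (x i) (x (i+1)) :=
    hfinal.trans (mul_le_mul_of_nonneg_right hmono hSnn)
  have h6 : d 0 ≤ (2:ℝ) ^ ε * ((2:ℝ) ^ ε * (C.inf' hC fun c => dist v c)) :=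
    h5.trans (mul_le_mul_of_nonneg_left hpath (by positivity))
  have : (2:ℝ) ^ ε * (2:ℝ) ^ ε = (2:ℝ) ^ (2*ε) := by
    rw [← Real.rpow_add (by norm_num)]; ring_nf
  nlinarith [h6]
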